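/- Let γ₁, γ₂ be closed strict paths of length k on {1,...,n} with Im γ₁ ∩ Im γ₂ ≠ ∅, and let γ₁ ⊔ γ₂ be the closed strict path of length 2k obtained by splicing γ₂ into γ₁ at the first common vertex. Then w_{γ₁}(S) · w_{γ₂}(S) = w_{γ₁⊔γ₂}(S) for every injective S, and |Im(γ₁ ⊔ γ₂)| ≤ |Im γ₁| + |Im γ₂| − 1. -/

import Mathlib

open scoped InnerProductSpace

/-- The weight of a path `γ` of length `k` on `{1,...,n}` under an assignment
`S : {1,...,n} → E` of vectors. -/
noncomputable def pathWeight {E : Type*} [NormedAddCommGroup E] [InnerProductSpace ℂ E]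
    {n k : ℕ} (γ : Fin (k + 1) → Fin n) (S : Fin n → E) : ℂ :=
  ∏ j : Fin k, ⟪S (γ j.castSucc), S (γ j.succ)⟫_ℂ

/-- The splice `γ₁ ⊔ γ₂` of two closed paths of length `k` at positions `i₁` (on `γ₁`) and
`i₂` (on `γ₂`): follow `γ₁` up to `i₁`, then traverse `γ₂` cyclically starting from `i₂`,
then finish `γ₁`. -/
def splice {n k : ℕ} (γ₁ γ₂ : Fin (k + 1) → Fin n) (i₁ i₂ : Fin (k + 1)) :
    Fin (2 * k + 1) → Fin n := fun j =>
  if h1 : (j : ℕ) < (i₁ : ℕ) then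
    γ₁ ⟨j, by have := j.isLt; have := i₁.isLt; omega⟩
  else if h2 : (j : ℕ) ≤ (i₁ : ℕ) + k then
    if h3 : (i₂ : ℕ) + ((j : ℕ) - (i₁ : ℕ)) ≤ k then
      γ₂ ⟨(i₂ : ℕ) + ((j : ℕ) - (i₁ : ℕ)), by omega⟩
    else
      γ₂ ⟨(i₂ : ℕ) + ((j : ℕ) - (i₁ : ℕ)) - k, by have := i₂.isLt; omega⟩
  else γ₁ ⟨(j : ℕ) - k, by have := j.isLt; omega⟩

private lemma splice_apply {n k : ℕ} (γ₁ γ₂ : Fin (k + 1) → Fin n) (i₁ i₂ : Fin (k + 1))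
    (m : ℕ) (hm : m < 2 * k + 1) :
    splice γ₁ γ₂ i₁ i₂ ⟨m, hm⟩ =
      if _ : m < (i₁ : ℕ) then γ₁ ⟨m, by have := i₁.isLt; omega⟩
      else if _ : m ≤ (i₁ : ℕ) + k then
        if _ : (i₂ : ℕ) + (m - (i₁ : ℕ)) ≤ k then
          γ₂ ⟨(i₂ : ℕ) + (m - (i₁ : ℕ)), by omega⟩
        else γ₂ ⟨(i₂ : ℕ) + (m - (i₁ : ℕ)) - k, by have := i₂.isLt; omega⟩
      else γ₁ ⟨m - k, by omega⟩ := rfl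

/-- For closed strict paths `γ₁, γ₂` of length `k` on `{1,...,n}` with intersecting images,
spliced at the first common vertex, the weights multiply, `w_{γ₁}(S)·w_{γ₂}(S) =
w_{γ₁⊔γ₂}(S)` for every injective assignment `S`, and the vertex set of the splice satisfies
`|Im(γ₁ ⊔ γ₂)| ≤ |Im γ₁| + |Im γ₂| − 1`. -/
theorem stmt_17 {E : Type*} [NormedAddCommGroup E] [InnerProductSpace ℂ E]
    (n k : ℕ) (γ₁ γ₂ : Fin (k + 1) → Fin n)
    (hclosed₁ : γ₁ 0 = γ₁ (Fin.last k))
    (hstrict₁ : ∀ j : Fin k, γ₁ j.castSucc ≠ γ₁ j.succ)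
    (hclosed₂ : γ₂ 0 = γ₂ (Fin.last k))
    (hstrict₂ : ∀ j : Fin k, γ₂ j.castSucc ≠ γ₂ j.succ)
    (i₁ i₂ : Fin (k + 1))
    (hi₁ : γ₁ i₁ ∈ Set.range γ₂ ∧ ∀ j : Fin (k + 1), (j : ℕ) < (i₁ : ℕ) →
      γ₁ j ∉ Set.range γ₂)
    (hi₂ : γ₂ i₂ = γ₁ i₁ ∧ ∀ j : Fin (k + 1), (j : ℕ) < (i₂ : ℕ) → γ₂ j ≠ γ₁ i₁) :
    (∀ S : Fin n → E, Function.Injective S →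
        pathWeight γ₁ S * pathWeight γ₂ S = pathWeight (splice γ₁ γ₂ i₁ i₂) S) ∧
      (Set.range (splice γ₁ γ₂ i₁ i₂)).ncard ≤
        (Set.range γ₁).ncard + (Set.range γ₂).ncard - 1 := by
  obtain ⟨hi₂eq, -⟩ := hi₂
  have hi₁k : (i₁ : ℕ) ≤ k := by omega
  have hi₂k : (i₂ : ℕ) ≤ k := by omega
  constructor
  · intro S _
    rcases Nat.eq_zero_or_pos k with hk | hk
    · subst hk
      simp [pathWeight]
    set G₁ : ℕ → Fin n := fun m => γ₁ ⟨min m k, Nat.lt_succ_of_le (min_le_right m k)⟩ with hG₁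
    set G₂ : ℕ → Fin n := fun m => γ₂ ⟨min m k, Nat.lt_succ_of_le (min_le_right m k)⟩ with hG₂
    set Gs : ℕ → Fin n := fun m =>
      splice γ₁ γ₂ i₁ i₂ ⟨min m (2 * k), Nat.lt_succ_of_le (min_le_right m (2 * k))⟩ with hGs
    have hG₁eq : ∀ m : ℕ, ∀ h : m < k + 1, G₁ m = γ₁ ⟨m, h⟩ := by
      intro m h
      simp only [hG₁]
      exact congrArg γ₁ (Fin.ext (min_eq_left (by omega)))
    have hG₂eq : ∀ m : ℕ, ∀ h : m < k + 1, G₂ m = γ₂ ⟨m, h⟩ := by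
      intro m h
      simp only [hG₂]
      exact congrArg γ₂ (Fin.ext (min_eq_left (by omega)))
    have hGseq : ∀ m : ℕ, ∀ h : m < 2 * k + 1, Gs m = splice γ₁ γ₂ i₁ i₂ ⟨m, h⟩ := by
      intro m h
      simp only [hGs]
      exact congrArg _ (Fin.ext (min_eq_left (by omega)))
    have hG₂k : G₂ k = G₂ 0 := by
      rw [hG₂eq k (by omega), hG₂eq 0 (by omega)]
      rw [show (⟨k, by omega⟩ : Fin (k+1)) = Fin.last k from rfl, ← hclosed₂]
      exact congrArg γ₂ (Fin.ext (by simp))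
    set f₁ : ℕ → ℂ := fun m => ⟪S (G₁ m), S (G₁ (m + 1))⟫_ℂ with hf₁
    set f₂ : ℕ → ℂ := fun m => ⟪S (G₂ m), S (G₂ (m + 1))⟫_ℂ with hf₂
    set fs : ℕ → ℂ := fun m => ⟪S (Gs m), S (Gs (m + 1))⟫_ℂ with hfs
    -- key value lemmas
    have hA : ∀ m : ℕ, m ≤ (i₁ : ℕ) → Gs m = G₁ m := by
      intro m hm
      rw [hGseq m (by omega), splice_apply, hG₁eq m (by omega)]
      by_cases h1 : m < (i₁ : ℕ)
      · rw [dif_pos h1]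
      · have hm' : m = (i₁ : ℕ) := by omega
        rw [dif_neg h1, dif_pos (by omega), dif_pos (by omega : (i₂:ℕ) + (m - (i₁:ℕ)) ≤ k)]
        rw [show (⟨(i₂:ℕ) + (m - (i₁:ℕ)), by omega⟩ : Fin (k+1)) = i₂ from
          Fin.ext (show (i₂:ℕ) + (m - (i₁:ℕ)) = (i₂:ℕ) by omega), hi₂eq]
        exact congrArg γ₁ (Fin.ext (show (i₁:ℕ) = m by omega))
    have hB : ∀ m : ℕ, (i₁ : ℕ) + k ≤ m → m ≤ 2 * k → Gs m = G₁ (m - k) := by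
      intro m hm1 hm2
      rw [hGseq m (by omega), splice_apply, hG₁eq (m - k) (by omega)]
      by_cases h2 : m = (i₁ : ℕ) + k
      · rw [dif_neg (by omega), dif_pos (by omega)]
        by_cases h3 : (i₂ : ℕ) + (m - (i₁:ℕ)) ≤ k
        · have hz : (i₂ : ℕ) = 0 := by omega
          rw [dif_pos h3]
          rw [show (⟨(i₂:ℕ) + (m - (i₁:ℕ)), by omega⟩ : Fin (k+1)) = Fin.last k from
            Fin.ext (show (i₂:ℕ) + (m - (i₁:ℕ)) = k by omega), ← hclosed₂]
          rw [show (0 : Fin (k+1)) = i₂ from Fin.ext (by simp [hz]), hi₂eq]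
          exact congrArg γ₁ (Fin.ext (show (i₁:ℕ) = m - k by omega))
        · rw [dif_neg h3]
          rw [show (⟨(i₂:ℕ) + (m - (i₁:ℕ)) - k, by have := i₂.isLt; omega⟩ : Fin (k+1)) = i₂
            from Fin.ext (show (i₂:ℕ) + (m - (i₁:ℕ)) - k = (i₂:ℕ) by omega), hi₂eq]
          exact congrArg γ₁ (Fin.ext (show (i₁:ℕ) = m - k by omega))
      · rw [dif_neg (by omega), dif_neg (by omega)]
    have hC1 : ∀ e : ℕ, (i₂ : ℕ) + e ≤ k → Gs ((i₁ : ℕ) + e) = G₂ ((i₂ : ℕ) + e) := by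
      intro e he
      rw [hGseq ((i₁:ℕ) + e) (by omega), splice_apply, hG₂eq ((i₂:ℕ) + e) (by omega)]
      rw [dif_neg (by omega), dif_pos (by omega),
        dif_pos (by omega : (i₂:ℕ) + ((i₁:ℕ) + e - (i₁:ℕ)) ≤ k)]
      exact congrArg γ₂ (Fin.ext (show (i₂:ℕ) + ((i₁:ℕ) + e - (i₁:ℕ)) = (i₂:ℕ) + e by omega))
    have hC2 : ∀ e : ℕ, e ≤ k → k < (i₂ : ℕ) + e →
        Gs ((i₁ : ℕ) + e) = G₂ ((i₂ : ℕ) + e - k) := by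
      intro e he hke
      rw [hGseq ((i₁:ℕ) + e) (by omega), splice_apply, hG₂eq ((i₂:ℕ) + e - k) (by omega)]
      rw [dif_neg (by omega), dif_pos (by omega),
        dif_neg (by omega : ¬ ((i₂:ℕ) + ((i₁:ℕ) + e - (i₁:ℕ)) ≤ k))]
      exact congrArg γ₂ (Fin.ext
        (show (i₂:ℕ) + ((i₁:ℕ) + e - (i₁:ℕ)) - k = (i₂:ℕ) + e - k by omega))
    -- weights as range products
    have hw1 : pathWeight γ₁ S = ∏ m ∈ Finset.range k, f₁ m := by
      rw [pathWeight, Finset.prod_range]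
      refine Finset.prod_congr rfl fun j _ => ?_
      show ⟪S (γ₁ j.castSucc), S (γ₁ j.succ)⟫_ℂ = ⟪S (G₁ (j:ℕ)), S (G₁ ((j:ℕ) + 1))⟫_ℂ
      rw [hG₁eq (j:ℕ) (by omega), hG₁eq ((j:ℕ) + 1) (by omega)]
      rfl
    have hw2 : pathWeight γ₂ S = ∏ m ∈ Finset.range k, f₂ m := by
      rw [pathWeight, Finset.prod_range]
      refine Finset.prod_congr rfl fun j _ => ?_
      show ⟪S (γ₂ j.castSucc), S (γ₂ j.succ)⟫_ℂ = ⟪S (G₂ (j:ℕ)), S (G₂ ((j:ℕ) + 1))⟫_ℂ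
      rw [hG₂eq (j:ℕ) (by omega), hG₂eq ((j:ℕ) + 1) (by omega)]
      rfl
    have hws : pathWeight (splice γ₁ γ₂ i₁ i₂) S = ∏ m ∈ Finset.range (2 * k), fs m := by
      rw [pathWeight, Finset.prod_range]
      refine Finset.prod_congr rfl fun j _ => ?_
      show ⟪S (splice γ₁ γ₂ i₁ i₂ j.castSucc), S (splice γ₁ γ₂ i₁ i₂ j.succ)⟫_ℂ =
        ⟪S (Gs (j:ℕ)), S (Gs ((j:ℕ) + 1))⟫_ℂ
      rw [hGseq (j:ℕ) (by omega), hGseq ((j:ℕ) + 1) (by omega)]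
      rfl
    rw [hw1, hw2, hws]
    have hsplit : ∏ m ∈ Finset.range (2 * k), fs m =
        ((∏ m ∈ Finset.Ico 0 (i₁ : ℕ), fs m) * ∏ m ∈ Finset.Ico (i₁ : ℕ) ((i₁ : ℕ) + k), fs m) *
          ∏ m ∈ Finset.Ico ((i₁ : ℕ) + k) (2 * k), fs m := by
      rw [Finset.prod_Ico_consecutive fs (by omega) (by omega : (i₁:ℕ) ≤ (i₁:ℕ) + k),
        Finset.prod_Ico_consecutive fs (by omega) (by omega), ← Nat.Ico_zero_eq_range]
    rw [hsplit]
    have hP1 : ∏ m ∈ Finset.Ico 0 (i₁ : ℕ), fs m = ∏ m ∈ Finset.Ico 0 (i₁ : ℕ), f₁ m := by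
      refine Finset.prod_congr rfl fun m hm => ?_
      rw [Finset.mem_Ico] at hm
      simp only [hfs, hf₁]
      rw [hA m (by omega), hA (m + 1) (by omega)]
    have hP3 : ∏ m ∈ Finset.Ico ((i₁ : ℕ) + k) (2 * k), fs m =
        ∏ m ∈ Finset.Ico (i₁ : ℕ) k, f₁ m := by
      rw [Finset.prod_Ico_eq_prod_range, Finset.prod_Ico_eq_prod_range,
        show 2 * k - ((i₁ : ℕ) + k) = k - (i₁ : ℕ) from by omega]
      refine Finset.prod_congr rfl fun m hm => ?_
      rw [Finset.mem_range] at hm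
      show fs ((i₁:ℕ) + k + m) = f₁ ((i₁:ℕ) + m)
      simp only [hfs, hf₁]
      rw [hB ((i₁:ℕ) + k + m) (by omega) (by omega),
        hB ((i₁:ℕ) + k + m + 1) (by omega) (by omega),
        show (i₁:ℕ) + k + m - k = (i₁:ℕ) + m from by omega,
        show (i₁:ℕ) + k + m + 1 - k = (i₁:ℕ) + m + 1 from by omega]
    have hP2 : ∏ m ∈ Finset.Ico (i₁ : ℕ) ((i₁ : ℕ) + k), fs m =
        ∏ m ∈ Finset.range k, f₂ m := by
      rw [Finset.prod_Ico_eq_prod_range, show (i₁ : ℕ) + k - (i₁ : ℕ) = k from by omega]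
      set t : ℕ := k - (i₂ : ℕ) with ht
      rw [← Nat.Ico_zero_eq_range,
        ← Finset.prod_Ico_consecutive (fun m => fs ((i₁:ℕ) + m)) (by omega : 0 ≤ t)
          (by omega : t ≤ k), Nat.Ico_zero_eq_range]
      have hQ1 : ∏ d ∈ Finset.range t, fs ((i₁:ℕ) + d) =
          ∏ m ∈ Finset.Ico (i₂ : ℕ) k, f₂ m := by
        rw [Finset.prod_Ico_eq_prod_range, show k - (i₂ : ℕ) = t from rfl]
        refine Finset.prod_congr rfl fun d hd => ?_
        rw [Finset.mem_range] at hd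
        show fs ((i₁:ℕ) + d) = f₂ ((i₂:ℕ) + d)
        simp only [hfs, hf₂]
        rw [hC1 d (by omega), show (i₁:ℕ) + d + 1 = (i₁:ℕ) + (d + 1) from by omega,
          hC1 (d + 1) (by omega), show (i₂:ℕ) + (d + 1) = (i₂:ℕ) + d + 1 from by omega]
      have hQ2 : ∏ d ∈ Finset.Ico t k, fs ((i₁:ℕ) + d) =
          ∏ m ∈ Finset.range (i₂ : ℕ), f₂ m := by
        rw [Finset.prod_Ico_eq_prod_range, show k - t = (i₂ : ℕ) from by omega]
        refine Finset.prod_congr rfl fun m hm => ?_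
        rw [Finset.mem_range] at hm
        show fs ((i₁:ℕ) + (t + m)) = f₂ m
        simp only [hfs, hf₂]
        have hnext : Gs ((i₁:ℕ) + (t + m) + 1) = G₂ (m + 1) := by
          rw [show (i₁:ℕ) + (t + m) + 1 = (i₁:ℕ) + (t + m + 1) from by omega,
            hC2 (t + m + 1) (by omega) (by omega)]
          congr 1
          omega
        rcases Nat.eq_zero_or_pos m with hm0 | hm0
        · subst hm0
          rw [hnext, show (i₁:ℕ) + (t + 0) = (i₁:ℕ) + t from by omega, hC1 t (by omega),
            show (i₂:ℕ) + t = k from by omega, hG₂k]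
        · rw [hnext, hC2 (t + m) (by omega) (by omega),
            show (i₂:ℕ) + (t + m) - k = m from by omega]
      rw [hQ1, hQ2, mul_comm, ← Nat.Ico_zero_eq_range,
        Finset.prod_Ico_consecutive f₂ (by omega) (by omega)]
    rw [hP1, hP2, hP3]
    have hcomb : (∏ m ∈ Finset.Ico 0 (i₁ : ℕ), f₁ m) * ∏ m ∈ Finset.Ico (i₁ : ℕ) k, f₁ m =
        ∏ m ∈ Finset.range k, f₁ m := by
      rw [Finset.prod_Ico_consecutive f₁ (by omega) hi₁k, ← Nat.Ico_zero_eq_range]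
    rw [← hcomb]
    ring
  · have hfin₁ : (Set.range γ₁).Finite := Set.finite_range γ₁
    have hfin₂ : (Set.range γ₂).Finite := Set.finite_range γ₂
    have hsub : Set.range (splice γ₁ γ₂ i₁ i₂) ⊆ Set.range γ₁ ∪ Set.range γ₂ := by
      rintro _ ⟨⟨m, hm⟩, rfl⟩
      rw [splice_apply]
      split_ifs
      · exact Or.inl (Set.mem_range_self _)
      · exact Or.inr (Set.mem_range_self _)
      · exact Or.inr (Set.mem_range_self _)
      · exact Or.inl (Set.mem_range_self _)
    have hmem : γ₁ i₁ ∈ Set.range γ₁ ∩ Set.range γ₂ := ⟨Set.mem_range_self _, hi₁.1⟩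
    have hpos : 0 < (Set.range γ₁ ∩ Set.range γ₂).ncard :=
      (Set.ncard_pos (hfin₁.inter_of_left _)).mpr ⟨_, hmem⟩
    have hun := Set.ncard_union_add_ncard_inter (Set.range γ₁) (Set.range γ₂) hfin₁ hfin₂
    have hle : (Set.range (splice γ₁ γ₂ i₁ i₂)).ncard ≤
        (Set.range γ₁ ∪ Set.range γ₂).ncard :=
      Set.ncard_le_ncard hsub (hfin₁.union hfin₂)
    omega
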